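/- Let r^{(1)} be a function on ℝ lying in H^1(ℝ) ∩ L^{2,1}(ℝ), and let z₁ ∈ ℂ with Im(z₁) > 0. Then the function r^{(0)}(z) := r^{(1)}(z)·(z − conj(z₁))/(z − z₁) also belongs to H^1(ℝ) ∩ L^{2,1}(ℝ), and there is a constant c > 0 depending only on z₁ such that ‖r^{(0)}‖_{H^1 ∩ L^{2,1}} ≤ c‖r^{(1)}‖_{H^1 ∩ L^{2,1}}. -/

import Mathlib

open MeasureTheory Complex Filter
open scoped ENNReal

/-- Membership in `H¹(ℝ) ∩ L^{2,1}(ℝ)`: the function, its derivative, and its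
weighted version `⟨x⟩u(x)` are all in `L²`. -/
def MemH1L21 (u : ℝ → ℂ) : Prop :=
  MemLp u 2 (volume : Measure ℝ) ∧ Differentiable ℝ u ∧
    MemLp (deriv u) 2 (volume : Measure ℝ) ∧
    MemLp (fun x : ℝ => Real.sqrt (1 + x ^ 2) • u x) 2 (volume : Measure ℝ)

/-- The norm of `H¹(ℝ) ∩ L^{2,1}(ℝ)`. -/
noncomputable def normH1L21 (u : ℝ → ℂ) : ℝ≥0∞ :=
  eLpNorm u 2 volume + eLpNorm (deriv u) 2 volume +
    eLpNorm (fun x : ℝ => Real.sqrt (1 + x ^ 2) • u x) 2 volume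

section aux

variable (z₁ : ℂ)

/-- The Möbius factor restricted to the real line. -/
noncomputable def moeb (z : ℝ) : ℂ := ((z : ℂ) - (starRingEnd ℂ) z₁) / ((z : ℂ) - z₁)

/-- The derivative of the Möbius factor. -/
noncomputable def moeb' (z : ℝ) : ℂ :=
  ((starRingEnd ℂ) z₁ - z₁) / ((z : ℂ) - z₁) ^ 2

variable {z₁} (hz₁ : 0 < z₁.im)
include hz₁

theorem den_ne_zero (z : ℝ) : (z : ℂ) - z₁ ≠ 0 := by
  intro h
  have h2 := congrArg Complex.im h
  simp at h2
  linarith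

theorem moeb_norm (z : ℝ) : ‖moeb z₁ z‖ = 1 := by
  have h1 : (z : ℂ) - (starRingEnd ℂ) z₁ = (starRingEnd ℂ) ((z : ℂ) - z₁) := by
    simp [map_sub, Complex.conj_ofReal]
  rw [moeb, h1, norm_div, RCLike.norm_conj, div_self]
  exact norm_ne_zero_iff.mpr (den_ne_zero hz₁ z)

theorem moeb_hasDerivAt (z : ℝ) : HasDerivAt (moeb z₁) (moeb' z₁ z) z := by
  have h1 : HasDerivAt (fun w : ℂ => (w - (starRingEnd ℂ) z₁) / (w - z₁))
      ((1 * ((z : ℂ) - z₁) - ((z : ℂ) - (starRingEnd ℂ) z₁) * 1) / ((z : ℂ) - z₁) ^ 2)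
      (z : ℂ) :=
    HasDerivAt.div ((hasDerivAt_id _).sub_const _) ((hasDerivAt_id _).sub_const _)
      (den_ne_zero hz₁ z)
  have h2 := h1.comp_ofReal
  have h3 : moeb' z₁ z = (1 * ((z : ℂ) - z₁) - ((z : ℂ) - (starRingEnd ℂ) z₁) * 1) / ((z : ℂ) - z₁) ^ 2 := by
    unfold moeb'; ring
  rw [h3]; exact h2

theorem moeb'_norm_le (z : ℝ) : ‖moeb' z₁ z‖ ≤ 2 / z₁.im := by
  have him : z₁.im ≤ ‖(z : ℂ) - z₁‖ := by
    have h1 : |((z : ℂ) - z₁).im| ≤ ‖(z : ℂ) - z₁‖ := Complex.abs_im_le_norm _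
    have h2 : ((z : ℂ) - z₁).im = -z₁.im := by simp
    rw [h2, abs_neg, abs_of_pos hz₁] at h1
    exact h1
  have hnum : ‖(starRingEnd ℂ) z₁ - z₁‖ = 2 * z₁.im := by
    have : (starRingEnd ℂ) z₁ - z₁ = -((2 * z₁.im : ℝ) * I) := by
      rw [← Complex.sub_conj]; ring
    rw [this, norm_neg]
    simp [Complex.norm_real, abs_of_pos hz₁, abs_of_pos (by linarith : (0:ℝ) < 2 * z₁.im)]
  rw [moeb', norm_div, hnum, norm_pow]
  have hpos : (0:ℝ) < z₁.im ^ 2 := by positivity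
  have hle : z₁.im ^ 2 ≤ ‖(z : ℂ) - z₁‖ ^ 2 := by
    apply pow_le_pow_left₀ (le_of_lt hz₁) him
  calc 2 * z₁.im / ‖(z : ℂ) - z₁‖ ^ 2 ≤ 2 * z₁.im / z₁.im ^ 2 := by
        apply div_le_div_of_nonneg_left (by linarith) hpos hle
    _ = 2 / z₁.im := by
        have h0 : z₁.im ≠ 0 := ne_of_gt hz₁
        field_simp

theorem moeb_continuous : Continuous (moeb z₁) := by
  apply Continuous.div
  · fun_prop
  · fun_prop
  · exact fun z => den_ne_zero hz₁ z

theorem moeb'_continuous : Continuous (moeb' z₁) := by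
  apply Continuous.div
  · fun_prop
  · fun_prop
  · exact fun z => pow_ne_zero _ (den_ne_zero hz₁ z)

end aux

/-- Multiplying by the Möbius factor `(z - z̄₁)/(z - z₁)`, `Im z₁ > 0`, preserves
`H¹(ℝ) ∩ L^{2,1}(ℝ)` with a constant depending only on `z₁`. -/
theorem moebius_factor_preserves_H1L21 (z₁ : ℂ) (hz₁ : 0 < z₁.im) :
    ∃ c : ℝ≥0∞, 0 < c ∧ c ≠ ⊤ ∧ ∀ r₁ : ℝ → ℂ, MemH1L21 r₁ →
      MemH1L21 (fun z : ℝ => r₁ z * (((z : ℂ) - (starRingEnd ℂ) z₁) / ((z : ℂ) - z₁))) ∧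
      normH1L21 (fun z : ℝ => r₁ z * (((z : ℂ) - (starRingEnd ℂ) z₁) / ((z : ℂ) - z₁)))
        ≤ c * normH1L21 r₁ := by
  set C : ℝ := 2 / z₁.im with hC
  have hCpos : 0 < C := by positivity
  refine ⟨1 + ENNReal.ofReal C, ?_, ?_, ?_⟩
  · exact lt_of_lt_of_le one_pos (le_add_of_nonneg_right zero_le)
  · exact ENNReal.add_ne_top.mpr ⟨ENNReal.one_ne_top, ENNReal.ofReal_ne_top⟩
  intro r₁ ⟨h1, h2, h3, h4⟩
  set r₀ : ℝ → ℂ := fun z : ℝ => r₁ z * moeb z₁ z with hr₀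
  have hnorm_eq : ∀ z : ℝ, ‖r₀ z‖ = ‖r₁ z‖ := fun z => by
    rw [hr₀]; simp [norm_mul, moeb_norm hz₁ z]
  -- L² membership
  have hr₀_meas : AEStronglyMeasurable r₀ volume :=
    h1.aestronglyMeasurable.mul (moeb_continuous hz₁).aestronglyMeasurable
  have hL2 : MemLp r₀ 2 volume :=
    h1.of_le hr₀_meas (Eventually.of_forall fun z => le_of_eq (hnorm_eq z))
  have heq0 : eLpNorm r₀ 2 volume = eLpNorm r₁ 2 volume :=
    eLpNorm_congr_norm_ae (Eventually.of_forall hnorm_eq)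
  -- weighted membership
  have hwnorm : ∀ z : ℝ, ‖Real.sqrt (1 + z ^ 2) • r₀ z‖ = ‖Real.sqrt (1 + z ^ 2) • r₁ z‖ := by
    intro z
    simp [norm_smul, hnorm_eq z]
  have hW : MemLp (fun z : ℝ => Real.sqrt (1 + z ^ 2) • r₀ z) 2 volume :=
    h4.of_le ((Continuous.aestronglyMeasurable (by fun_prop :
        Continuous fun z : ℝ => Real.sqrt (1 + z ^ 2))).smul hr₀_meas)
      (Eventually.of_forall fun z => le_of_eq (hwnorm z))
  have heqW : eLpNorm (fun z : ℝ => Real.sqrt (1 + z ^ 2) • r₀ z) 2 volume =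
      eLpNorm (fun z : ℝ => Real.sqrt (1 + z ^ 2) • r₁ z) 2 volume :=
    eLpNorm_congr_norm_ae (Eventually.of_forall hwnorm)
  -- differentiability and derivative
  have hderiv : ∀ z : ℝ, HasDerivAt r₀ (deriv r₁ z * moeb z₁ z + r₁ z * moeb' z₁ z) z := by
    intro z
    exact ((h2 z).hasDerivAt).mul (moeb_hasDerivAt hz₁ z)
  have hdiff : Differentiable ℝ r₀ := fun z => (hderiv z).differentiableAt
  have hderiv_eq : deriv r₀ = fun z => deriv r₁ z * moeb z₁ z + r₁ z * moeb' z₁ z :=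
    funext fun z => (hderiv z).deriv
  -- pieces of derivative
  have hA_meas : AEStronglyMeasurable (fun z => deriv r₁ z * moeb z₁ z) volume :=
    h3.aestronglyMeasurable.mul (moeb_continuous hz₁).aestronglyMeasurable
  have hB_meas : AEStronglyMeasurable (fun z => r₁ z * moeb' z₁ z) volume :=
    h1.aestronglyMeasurable.mul (moeb'_continuous hz₁).aestronglyMeasurable
  have hA_norm : ∀ z : ℝ, ‖deriv r₁ z * moeb z₁ z‖ = ‖deriv r₁ z‖ := fun z => by
    simp [norm_mul, moeb_norm hz₁ z]
  have hA : MemLp (fun z => deriv r₁ z * moeb z₁ z) 2 volume :=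
    h3.of_le hA_meas (Eventually.of_forall fun z => le_of_eq (hA_norm z))
  have hB_bound : ∀ z : ℝ, ‖r₁ z * moeb' z₁ z‖ ≤ C * ‖r₁ z‖ := fun z => by
    rw [norm_mul, mul_comm]
    exact mul_le_mul_of_nonneg_right (moeb'_norm_le hz₁ z) (norm_nonneg _)
  have hB : MemLp (fun z => r₁ z * moeb' z₁ z) 2 volume :=
    h1.of_le_mul hB_meas (Eventually.of_forall hB_bound)
  have hD : MemLp (deriv r₀) 2 volume := by
    rw [hderiv_eq]; exact hA.add hB
  -- eLpNorm bound for the derivative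
  have heqA : eLpNorm (fun z => deriv r₁ z * moeb z₁ z) 2 volume =
      eLpNorm (deriv r₁) 2 volume :=
    eLpNorm_congr_norm_ae (Eventually.of_forall hA_norm)
  have heqB : eLpNorm (fun z => r₁ z * moeb' z₁ z) 2 volume ≤
      ENNReal.ofReal C * eLpNorm r₁ 2 volume := by
    have hle : eLpNorm (fun z => r₁ z * moeb' z₁ z) 2 volume ≤
        eLpNorm (fun z => (C : ℂ) • r₁ z) 2 volume := by
      apply eLpNorm_mono_ae (Eventually.of_forall fun z => ?_)
      rw [norm_smul]
      calc ‖r₁ z * moeb' z₁ z‖ ≤ C * ‖r₁ z‖ := hB_bound z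
        _ = ‖(C : ℂ)‖ * ‖r₁ z‖ := by
            rw [Complex.norm_real, Real.norm_of_nonneg (le_of_lt hCpos)]
    refine hle.trans ?_
    have hfn : (fun z => (C : ℂ) • r₁ z) = (C : ℂ) • r₁ := rfl
    have hnn : ‖(C : ℂ)‖₊ = C.toNNReal := by
      ext
      simp [Real.coe_toNNReal', Complex.norm_real, Real.norm_of_nonneg hCpos.le, hCpos.le]
    have hcoe : ((‖(C : ℂ)‖₊ : NNReal) : ℝ≥0∞) = ENNReal.ofReal C := by
      rw [hnn, ENNReal.ofReal]
    rw [hfn, eLpNorm_const_smul, enorm_eq_nnnorm, hcoe]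
  have hDnorm : eLpNorm (deriv r₀) 2 volume ≤
      eLpNorm (deriv r₁) 2 volume + ENNReal.ofReal C * eLpNorm r₁ 2 volume := by
    rw [hderiv_eq]
    calc eLpNorm (fun z => deriv r₁ z * moeb z₁ z + r₁ z * moeb' z₁ z) 2 volume
        ≤ eLpNorm (fun z => deriv r₁ z * moeb z₁ z) 2 volume +
          eLpNorm (fun z => r₁ z * moeb' z₁ z) 2 volume :=
          eLpNorm_add_le hA_meas hB_meas one_le_two
      _ ≤ eLpNorm (deriv r₁) 2 volume + ENNReal.ofReal C * eLpNorm r₁ 2 volume := by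
          rw [heqA]; exact add_le_add le_rfl heqB
  have hfun : (fun z : ℝ => r₁ z * (((z : ℂ) - (starRingEnd ℂ) z₁) / ((z : ℂ) - z₁))) = r₀ :=
    rfl
  rw [hfun]
  constructor
  · exact ⟨hL2, hdiff, hD, hW⟩
  · unfold normH1L21
    rw [heq0, heqW]
    set A := eLpNorm r₁ 2 volume
    set B := eLpNorm (deriv r₁) 2 volume
    set W := eLpNorm (fun x : ℝ => Real.sqrt (1 + x ^ 2) • r₁ x) 2 volume
    calc A + eLpNorm (deriv r₀) 2 volume + W
        ≤ A + (B + ENNReal.ofReal C * A) + W := by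
          exact add_le_add_left (add_le_add_right hDnorm _) _
      _ ≤ (1 + ENNReal.ofReal C) * (A + B + W) := by
          rw [add_mul, one_mul]
          have h5 : ENNReal.ofReal C * A ≤ ENNReal.ofReal C * (A + B + W) :=
            mul_le_mul_right (by calc A ≤ A + B := le_self_add
              _ ≤ A + B + W := le_self_add) _
          calc A + (B + ENNReal.ofReal C * A) + W
              = (A + B + W) + ENNReal.ofReal C * A := by ring
            _ ≤ (A + B + W) + ENNReal.ofReal C * (A + B + W) := add_le_add_right h5 _
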